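/- Let G ∈ ℝ^{n×n} and P ∈ ℝ^{n×n} be symmetric positive definite. If PG + Gᵀ P ≻ 0, then for every nonzero x ∈ ℝ^n the map s ↦ xᵀ (e^{sG})ᵀ P e^{sG} x is strictly increasing in s ∈ ℝ. -/

import Mathlib

open Matrix

/-- Weighted quadratic form `xᵀ P x`. -/
noncomputable def quadForm {n : ℕ} (P : Matrix (Fin n) (Fin n) ℝ) (x : Fin n → ℝ) : ℝ :=
  x ⬝ᵥ P *ᵥ x

attribute [local instance] Matrix.linftyOpNormedAddCommGroup Matrix.linftyOpNormedRing
  Matrix.linftyOpNormedAlgebra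

private noncomputable def entryCLM {n : ℕ} (x : Fin n → ℝ) (i : Fin n) :
    Matrix (Fin n) (Fin n) ℝ →L[ℝ] ℝ :=
  LinearMap.toContinuousLinearMap
    { toFun := fun B => (B *ᵥ x) i
      map_add' := by intro B C; simp [Matrix.add_mulVec]
      map_smul' := by intro c B; simp [Matrix.smul_mulVec] }

theorem stmt0 {n : ℕ} (G P : Matrix (Fin n) (Fin n) ℝ)
    (hP : P.PosDef) (hmono : (P * G + Gᵀ * P).PosDef)
    (x : Fin n → ℝ) (hx : x ≠ 0) :
    StrictMono (fun s : ℝ => quadForm P (NormedSpace.exp (s • G) *ᵥ x)) := by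
  set A : ℝ → Matrix (Fin n) (Fin n) ℝ := fun s => NormedSpace.exp (s • G) with hA
  set v : ℝ → (Fin n → ℝ) := fun s => A s *ᵥ x with hv
  have hvne : ∀ s, v s ≠ 0 := by
    intro s h0
    have hu : IsUnit (A s) := Matrix.isUnit_exp (s • G)
    obtain ⟨u, hu⟩ := hu
    apply hx
    have h2 : ((u⁻¹ : (Matrix (Fin n) (Fin n) ℝ)ˣ) : Matrix (Fin n) (Fin n) ℝ) *ᵥ
        (A s *ᵥ x) = x := by
      rw [Matrix.mulVec_mulVec, ← hu, Units.inv_mul, Matrix.one_mulVec]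
    rw [← h2]
    show _ *ᵥ v s = 0
    rw [h0, Matrix.mulVec_zero]
  -- derivative of each coordinate of v
  have hA' : ∀ s, HasDerivAt A (A s * G) s := fun s => hasDerivAt_exp_smul_const G s
  have hvi : ∀ s i, HasDerivAt (fun t => v t i) (((A s * G) *ᵥ x) i) s := by
    intro s i
    have := (entryCLM x i).hasFDerivAt.comp_hasDerivAt s (hA' s)
    rw [entryCLM, LinearMap.coe_toContinuousLinearMap'] at this
    exact this
  -- derivative of the quadratic form
  have key : ∀ s, HasDerivAt (fun t : ℝ => quadForm P (v t))
      (v s ⬝ᵥ (P * G + Gᵀ * P) *ᵥ v s) s := by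
    intro s
    have hw : ∀ i, (((A s * G) *ᵥ x) i) = (G *ᵥ v s) i := by
      intro i
      have hc : A s * G = G * A s :=
        (((Commute.refl G).smul_right s).exp_right).symm
      rw [hc, ← Matrix.mulVec_mulVec]
    have expand : ∀ t : ℝ, quadForm P (v t) =
        ∑ i, v t i * ∑ j, P i j * v t j := by
      intro t
      simp [quadForm, dotProduct, Matrix.mulVec, dotProduct]
    have hder : HasDerivAt (fun t : ℝ => ∑ i, v t i * ∑ j, P i j * v t j)
        (∑ i, ((G *ᵥ v s) i * ∑ j, P i j * v s j
          + v s i * ∑ j, P i j * (G *ᵥ v s) j)) s := by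
      apply HasDerivAt.fun_sum
      intro i _
      have h1 : HasDerivAt (fun t => v t i) ((G *ᵥ v s) i) s := by
        rw [← hw]; exact hvi s i
      have h2 : HasDerivAt (fun t => ∑ j, P i j * v t j)
          (∑ j, P i j * (G *ᵥ v s) j) s := by
        apply HasDerivAt.fun_sum
        intro j _
        exact ((by rw [← hw]; exact hvi s j : HasDerivAt (fun t => v t j)
          ((G *ᵥ v s) j) s)).const_mul (P i j)
      exact h1.mul h2
    have heq : (∑ i, ((G *ᵥ v s) i * ∑ j, P i j * v s j
          + v s i * ∑ j, P i j * (G *ᵥ v s) j))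
        = v s ⬝ᵥ (P * G + Gᵀ * P) *ᵥ v s := by
      have e1 : (∑ i, (G *ᵥ v s) i * ∑ j, P i j * v s j)
          = (G *ᵥ v s) ⬝ᵥ P *ᵥ v s := by
        simp [dotProduct, Matrix.mulVec]
      have e2 : (∑ i, v s i * ∑ j, P i j * (G *ᵥ v s) j)
          = v s ⬝ᵥ P *ᵥ (G *ᵥ v s) := by
        simp [dotProduct, Matrix.mulVec]
      have e3 : v s ⬝ᵥ P *ᵥ (G *ᵥ v s) = v s ⬝ᵥ (P * G) *ᵥ v s := by
        rw [Matrix.mulVec_mulVec]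
      have e4 : (G *ᵥ v s) ⬝ᵥ P *ᵥ v s = v s ⬝ᵥ (Gᵀ * P) *ᵥ v s := by
        rw [← Matrix.vecMul_transpose, ← Matrix.dotProduct_mulVec,
          Matrix.mulVec_mulVec]
      rw [Finset.sum_add_distrib, e1, e2, e3, e4, Matrix.add_mulVec,
        dotProduct_add]
      exact add_comm _ _
    rw [funext expand, ← heq]
    exact hder
  apply strictMono_of_deriv_pos
  intro s
  rw [(key s).deriv]
  have := (Matrix.posDef_iff_dotProduct_mulVec.mp hmono).2 (hvne s)
  simpa using this
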